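/- Let z : [0,∞) → ℝ be differentiable and let c : [0,∞) → (0,∞) be continuous. Suppose that for all τ ≥ 0: √2·sin(z(τ) + π/4) - 11/8 ≤ z'(τ)/c(τ) ≤ √2·sin(z(τ) + π/4) - 9/8. Then z is bounded on [0,∞). -/

import Mathlib

open Real Set

lemma barrier_aux (f : ℝ → ℝ) (hf : ∀ t : ℝ, 0 ≤ t → DifferentiableAt ℝ f t)
    (a : ℝ) (h0 : f 0 < a)
    (hbar : ∀ s : ℝ, 0 ≤ s → f s = a → deriv f s < 0) :
    ∀ τ : ℝ, 0 ≤ τ → f τ ≤ a := by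
  intro τ₀ hτ₀
  by_contra hgt
  push_neg at hgt
  set S : Set ℝ := {t | t ∈ Icc 0 τ₀ ∧ f t ≤ a} with hS
  have hcont : ContinuousOn f (Icc 0 τ₀) := fun t ht =>
    ((hf t ht.1).continuousAt).continuousWithinAt
  have hSclosed : IsClosed S := by
    have : S = Icc 0 τ₀ ∩ f ⁻¹' Iic a := by
      ext t; constructor
      · exact fun h => ⟨h.1, h.2⟩
      · exact fun h => ⟨h.1, h.2⟩
    rw [this]
    exact hcont.preimage_isClosed_of_isClosed isClosed_Icc isClosed_Iic
  have hSne : S.Nonempty := ⟨0, ⟨le_refl 0, hτ₀⟩, h0.le⟩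
  have hSbdd : BddAbove S := ⟨τ₀, fun t ht => ht.1.2⟩
  set s := sSup S with hs
  have hsS : s ∈ S := hSclosed.csSup_mem hSne hSbdd
  have hs0 : 0 ≤ s := hsS.1.1
  have hsτ : s ≤ τ₀ := hsS.1.2
  have hsne : s ≠ τ₀ := fun h => absurd hsS.2 (by rw [h]; exact not_le.mpr hgt)
  have hslt : s < τ₀ := lt_of_le_of_ne hsτ hsne
  have habove : ∀ t, t ∈ Ioc s τ₀ → a < f t := by
    intro t ht
    by_contra h
    push_neg at h
    have : t ∈ S := ⟨⟨hs0.trans ht.1.le, ht.2⟩, h⟩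
    exact absurd (le_csSup hSbdd this) (not_le.mpr ht.1)
  have hmem : Ioc s τ₀ ∈ nhdsWithin s (Ioi s) :=
    Ioc_mem_nhdsGT_of_mem ⟨le_refl s, hslt⟩
  have hcontf : ContinuousAt f s := (hf s hs0).continuousAt
  -- f s = a
  have hfsa : f s = a := by
    refine le_antisymm hsS.2 ?_
    have htend : Filter.Tendsto f (nhdsWithin s (Ioi s)) (nhds (f s)) :=
      hcontf.continuousWithinAt.tendsto
    refine ge_of_tendsto htend ?_
    filter_upwards [hmem] with t ht
    exact (habove t ht).le
  have hderiv : deriv f s < 0 := hbar s hs0 hfsa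
  -- slope nonneg
  have hslope : Filter.Tendsto (slope f s) (nhdsWithin s (Ioi s)) (nhds (deriv f s)) := by
    have := (hf s hs0).hasDerivAt
    have h2 := hasDerivAt_iff_tendsto_slope.mp this
    exact h2.mono_left (nhdsWithin_mono s (fun x hx => ne_of_gt hx))
  have : 0 ≤ deriv f s := by
    refine ge_of_tendsto hslope ?_
    filter_upwards [hmem] with t ht
    have h1 : 0 < t - s := sub_pos.mpr ht.1
    have h2 : 0 ≤ f t - f s := by
      rw [hfsa]; exact sub_nonneg.mpr (habove t ht).le
    rw [slope_def_field]
    exact div_nonneg h2 h1.le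
  linarith

/-- Differential-inequality lemma: if `z : [0,∞) → ℝ` is differentiable,
`c : [0,∞) → (0,∞)` is continuous, and for all `τ ≥ 0`
`√2 sin(z(τ)+π/4) - 11/8 ≤ z'(τ)/c(τ) ≤ √2 sin(z(τ)+π/4) - 9/8`,
then `z` is bounded on `[0,∞)`. -/
theorem stmt_7 (z c : ℝ → ℝ)
    (hz : ∀ τ : ℝ, 0 ≤ τ → DifferentiableAt ℝ z τ)
    (hc : ContinuousOn c (Set.Ici (0:ℝ)))
    (hcpos : ∀ τ : ℝ, 0 ≤ τ → 0 < c τ)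
    (hineq : ∀ τ : ℝ, 0 ≤ τ →
      Real.sqrt 2 * Real.sin (z τ + Real.pi/4) - 11/8 ≤ deriv z τ / c τ ∧
      deriv z τ / c τ ≤ Real.sqrt 2 * Real.sin (z τ + Real.pi/4) - 9/8) :
    ∃ C : ℝ, ∀ τ : ℝ, 0 ≤ τ → |z τ| ≤ C := by
  have hpi : (3:ℝ) < π := by linarith [pi_gt_three]
  have hsqrt2 : Real.sqrt 2 < 3/2 := by
    rw [show (3:ℝ)/2 = Real.sqrt ((3/2)^2) by rw [Real.sqrt_sq]; norm_num]
    exact Real.sqrt_lt_sqrt (by norm_num) (by norm_num)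
  have hsqrt2' : 11/8 < Real.sqrt 2 :=
    (Real.lt_sqrt (by norm_num)).mpr (by norm_num)
  -- upper barrier a = 5π/4 + 2π n
  obtain ⟨n, hn⟩ := exists_nat_gt (z 0)
  set a : ℝ := 5*π/4 + n * (2*π) with ha
  have hsin_a : Real.sin (a + π/4) = -1 := by
    have : a + π/4 = π + π/2 + n * (2*π) := by rw [ha]; ring
    rw [this, Real.sin_add_nat_mul_two_pi, Real.sin_add_pi_div_two, Real.cos_pi]
  have h0a : z 0 < a := by
    have h1 : (n:ℝ) ≤ (n:ℝ) * (2*π) := by nlinarith [Nat.cast_nonneg (α := ℝ) n]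
    have h2 : (0:ℝ) < 5*π/4 := by linarith
    calc z 0 < (n:ℝ) := hn
      _ ≤ (n:ℝ) * (2*π) := h1
      _ < a := by rw [ha]; linarith
  -- lower barrier b = π/4 - 2π m
  obtain ⟨m, hm⟩ := exists_nat_gt (π/4 - z 0)
  set b : ℝ := π/4 - m * (2*π) with hb
  have hsin_b : Real.sin (b + π/4) = 1 := by
    have h : b + π/4 = π/2 - m * (2*π) := by rw [hb]; ring
    rw [h, Real.sin_periodic.sub_nat_mul_eq, Real.sin_pi_div_two]
  have h0b : b < z 0 := by
    have h1 : (m:ℝ) ≤ (m:ℝ) * (2*π) := by nlinarith [Nat.cast_nonneg (α := ℝ) m]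
    rw [hb]; linarith
  -- upper bound
  have hupper : ∀ τ : ℝ, 0 ≤ τ → z τ ≤ a := by
    refine barrier_aux z hz a h0a ?_
    intro s hs hfs
    have h2 := (hineq s hs).2
    rw [hfs, hsin_a] at h2
    have hds : deriv z s / c s < 0 := by nlinarith [Real.sqrt_nonneg 2]
    rcases div_neg_iff.mp hds with ⟨_, h⟩ | ⟨h, _⟩
    · exact absurd h (not_lt.mpr (hcpos s hs).le)
    · exact h
  -- lower bound via -z
  have hlower : ∀ τ : ℝ, 0 ≤ τ → b ≤ z τ := by
    have := barrier_aux (fun t => -z t) (fun t ht => (hz t ht).neg) (-b)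
      (by simpa using h0b) ?_
    · intro τ hτ; have := this τ hτ; simpa using this
    · intro s hs hfs
      have hzs : z s = b := by simpa using hfs
      have h1 := (hineq s hs).1
      rw [hzs, hsin_b, mul_one] at h1
      have hds : 0 < deriv z s / c s := by linarith
      have : 0 < deriv z s := by
        rcases div_pos_iff.mp hds with ⟨h, _⟩ | ⟨_, h⟩
        · exact h
        · exact absurd h (not_lt.mpr (hcpos s hs).le)
      rw [deriv.fun_neg]; linarith
  refine ⟨max a (-b), fun τ hτ => abs_le.mpr ⟨?_, ?_⟩⟩
  · have := hlower τ hτ; have h := le_max_right a (-b); linarith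
  · exact (hupper τ hτ).trans (le_max_left a (-b))
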